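/- A 6×6 real matrix X satisfies ᵗX h + h X = 0 if and only if X has the block form X = [[X₁, ᵗX₂, t·I₁,₁],[X₄, X₅, X₂L],[s·I₁,₁, LᵗX₄, -LᵗX₁L]] for some 2×2 matrices X₁, X₂, X₄, a skew-symmetric 2×2 matrix X₅, and scalars s, t ∈ ℝ, where I₁,₁ = diag(1,-1) and L = [[0,1],[1,0]]. -/

import Mathlib

open Matrix

/-- The 2×2 matrix L = [[0,1],[1,0]]. -/
def Lm : Matrix (Fin 2) (Fin 2) ℝ := !![0, 1; 1, 0]

/-- The 2×2 matrix I₁,₁ = diag(1,-1). -/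
def I11 : Matrix (Fin 2) (Fin 2) ℝ := !![1, 0; 0, -1]

/-- Assemble a 6×6 matrix from a 3×3 array of 2×2 blocks. -/
def blk (M : Matrix (Fin 3) (Fin 3) (Matrix (Fin 2) (Fin 2) ℝ)) :
    Matrix (Fin 6) (Fin 6) ℝ :=
  Matrix.of fun i j =>
    M ⟨i.val / 2, by have := i.isLt; omega⟩ ⟨j.val / 2, by have := j.isLt; omega⟩
      ⟨i.val % 2, by have := i.isLt; omega⟩ ⟨j.val % 2, by have := j.isLt; omega⟩

/-- The matrix h of the Lie sphere bilinear form, in 2×2 blocks. -/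
def hm : Matrix (Fin 6) (Fin 6) ℝ := blk !![0, 0, -Lm; 0, 1, 0; -Lm, 0, 0]

lemma blk_eq (A B C D E F G H K : Matrix (Fin 2) (Fin 2) ℝ) :
    blk !![A, B, C; D, E, F; G, H, K] =
    !![A 0 0, A 0 1, B 0 0, B 0 1, C 0 0, C 0 1;
       A 1 0, A 1 1, B 1 0, B 1 1, C 1 0, C 1 1;
       D 0 0, D 0 1, E 0 0, E 0 1, F 0 0, F 0 1;
       D 1 0, D 1 1, E 1 0, E 1 1, F 1 0, F 1 1;
       G 0 0, G 0 1, H 0 0, H 0 1, K 0 0, K 0 1;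
       G 1 0, G 1 1, H 1 0, H 1 1, K 1 0, K 1 1] := by
  ext i j
  fin_cases i <;> fin_cases j <;> rfl

lemma hm_eq : hm = !![0,0,0,0,0,-1; 0,0,0,0,-1,0; 0,0,1,0,0,0; 0,0,0,1,0,0; 0,-1,0,0,0,0; -1,0,0,0,0,0] := by
  rw [hm, blk_eq]
  norm_num [Lm]

lemma cons_val_five {α : Type*} (x : α) (u : Fin 5 → α) : Matrix.vecCons x u 5 = u 4 := rfl

set_option maxHeartbeats 1600000 in
/-- A 6×6 real matrix X satisfies ᵗX h + h X = 0 iff it has the block form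
[[X₁, ᵗX₂, t·I₁,₁],[X₄, X₅, X₂L],[s·I₁,₁, LᵗX₄, -LᵗX₁L]] with X₅ skew-symmetric. -/
theorem stmt4 (X : Matrix (Fin 6) (Fin 6) ℝ) :
    Xᵀ * hm + hm * X = 0 ↔
    ∃ (X₁ X₂ X₄ X₅ : Matrix (Fin 2) (Fin 2) ℝ) (s t : ℝ),
      X₅ᵀ = -X₅ ∧
      X = blk !![X₁, X₂ᵀ, t • I11;
                 X₄, X₅, X₂ * Lm;
                 s • I11, Lm * X₄ᵀ, -(Lm * X₁ᵀ * Lm)] := by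
  constructor
  · intro H
    rw [hm_eq] at H
    have e00 := Matrix.ext_iff.mpr H 0 0
    have e01 := Matrix.ext_iff.mpr H 0 1
    have e02 := Matrix.ext_iff.mpr H 0 2
    have e03 := Matrix.ext_iff.mpr H 0 3
    have e04 := Matrix.ext_iff.mpr H 0 4
    have e05 := Matrix.ext_iff.mpr H 0 5
    have e11 := Matrix.ext_iff.mpr H 1 1
    have e12 := Matrix.ext_iff.mpr H 1 2
    have e13 := Matrix.ext_iff.mpr H 1 3
    have e14 := Matrix.ext_iff.mpr H 1 4
    have e15 := Matrix.ext_iff.mpr H 1 5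
    have e22 := Matrix.ext_iff.mpr H 2 2
    have e23 := Matrix.ext_iff.mpr H 2 3
    have e24 := Matrix.ext_iff.mpr H 2 4
    have e25 := Matrix.ext_iff.mpr H 2 5
    have e33 := Matrix.ext_iff.mpr H 3 3
    have e34 := Matrix.ext_iff.mpr H 3 4
    have e35 := Matrix.ext_iff.mpr H 3 5
    have e44 := Matrix.ext_iff.mpr H 4 4
    have e45 := Matrix.ext_iff.mpr H 4 5
    have e55 := Matrix.ext_iff.mpr H 5 5
    simp [Matrix.mul_apply, Fin.sum_univ_six, cons_val_five, Matrix.vecMul, dotProduct, Matrix.vecHead, Matrix.vecTail] at e00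
    simp [Matrix.mul_apply, Fin.sum_univ_six, cons_val_five, Matrix.vecMul, dotProduct, Matrix.vecHead, Matrix.vecTail] at e01
    simp [Matrix.mul_apply, Fin.sum_univ_six, cons_val_five, Matrix.vecMul, dotProduct, Matrix.vecHead, Matrix.vecTail] at e02
    simp [Matrix.mul_apply, Fin.sum_univ_six, cons_val_five, Matrix.vecMul, dotProduct, Matrix.vecHead, Matrix.vecTail] at e03
    simp [Matrix.mul_apply, Fin.sum_univ_six, cons_val_five, Matrix.vecMul, dotProduct, Matrix.vecHead, Matrix.vecTail] at e04
    simp [Matrix.mul_apply, Fin.sum_univ_six, cons_val_five, Matrix.vecMul, dotProduct, Matrix.vecHead, Matrix.vecTail] at e05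
    simp [Matrix.mul_apply, Fin.sum_univ_six, cons_val_five, Matrix.vecMul, dotProduct, Matrix.vecHead, Matrix.vecTail] at e11
    simp [Matrix.mul_apply, Fin.sum_univ_six, cons_val_five, Matrix.vecMul, dotProduct, Matrix.vecHead, Matrix.vecTail] at e12
    simp [Matrix.mul_apply, Fin.sum_univ_six, cons_val_five, Matrix.vecMul, dotProduct, Matrix.vecHead, Matrix.vecTail] at e13
    simp [Matrix.mul_apply, Fin.sum_univ_six, cons_val_five, Matrix.vecMul, dotProduct, Matrix.vecHead, Matrix.vecTail] at e14
    simp [Matrix.mul_apply, Fin.sum_univ_six, cons_val_five, Matrix.vecMul, dotProduct, Matrix.vecHead, Matrix.vecTail] at e15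
    simp [Matrix.mul_apply, Fin.sum_univ_six, cons_val_five, Matrix.vecMul, dotProduct, Matrix.vecHead, Matrix.vecTail] at e22
    simp [Matrix.mul_apply, Fin.sum_univ_six, cons_val_five, Matrix.vecMul, dotProduct, Matrix.vecHead, Matrix.vecTail] at e23
    simp [Matrix.mul_apply, Fin.sum_univ_six, cons_val_five, Matrix.vecMul, dotProduct, Matrix.vecHead, Matrix.vecTail] at e24
    simp [Matrix.mul_apply, Fin.sum_univ_six, cons_val_five, Matrix.vecMul, dotProduct, Matrix.vecHead, Matrix.vecTail] at e25
    simp [Matrix.mul_apply, Fin.sum_univ_six, cons_val_five, Matrix.vecMul, dotProduct, Matrix.vecHead, Matrix.vecTail] at e33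
    simp [Matrix.mul_apply, Fin.sum_univ_six, cons_val_five, Matrix.vecMul, dotProduct, Matrix.vecHead, Matrix.vecTail] at e34
    simp [Matrix.mul_apply, Fin.sum_univ_six, cons_val_five, Matrix.vecMul, dotProduct, Matrix.vecHead, Matrix.vecTail] at e35
    simp [Matrix.mul_apply, Fin.sum_univ_six, cons_val_five, Matrix.vecMul, dotProduct, Matrix.vecHead, Matrix.vecTail] at e44
    simp [Matrix.mul_apply, Fin.sum_univ_six, cons_val_five, Matrix.vecMul, dotProduct, Matrix.vecHead, Matrix.vecTail] at e45
    simp [Matrix.mul_apply, Fin.sum_univ_six, cons_val_five, Matrix.vecMul, dotProduct, Matrix.vecHead, Matrix.vecTail] at e55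
    refine ⟨!![X 0 0, X 0 1; X 1 0, X 1 1], !![X 0 2, X 1 2; X 0 3, X 1 3],
      !![X 2 0, X 2 1; X 3 0, X 3 1], !![X 2 2, X 2 3; X 3 2, X 3 3],
      X 4 0, X 0 4, ?_, ?_⟩
    · ext i j
      fin_cases i <;> fin_cases j <;>
        simp [cons_val_five] <;> linarith [e00, e01, e02, e03, e04, e05, e11, e12, e13, e14, e15, e22, e23, e24, e25, e33, e34, e35, e44, e45, e55]
    · rw [blk_eq]
      ext i j
      fin_cases i <;> fin_cases j <;>
        simp [Lm, I11, Matrix.mul_apply, Fin.sum_univ_two, cons_val_five, Matrix.transpose_apply, Matrix.vecMul, dotProduct, Matrix.vecHead, Matrix.vecTail] <;>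
        linarith [e00, e01, e02, e03, e04, e05, e11, e12, e13, e14, e15, e22, e23, e24, e25, e33, e34, e35, e44, e45, e55]
  · rintro ⟨X₁, X₂, X₄, X₅, s, t, hsk, rfl⟩
    have k00 := Matrix.ext_iff.mpr hsk 0 0
    have k01 := Matrix.ext_iff.mpr hsk 0 1
    have k11 := Matrix.ext_iff.mpr hsk 1 1
    simp at k00 k01 k11
    have h2 : X₂ᵀ = !![X₂ 0 0, X₂ 1 0; X₂ 0 1, X₂ 1 1] := by
      ext i j; fin_cases i <;> fin_cases j <;> rfl
    have hIt : t • I11 = !![t, 0; 0, -t] := by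
      ext i j; fin_cases i <;> fin_cases j <;> simp [I11]
    have hIs : s • I11 = !![s, 0; 0, -s] := by
      ext i j; fin_cases i <;> fin_cases j <;> simp [I11]
    have h2L : X₂ * Lm = !![X₂ 0 1, X₂ 0 0; X₂ 1 1, X₂ 1 0] := by
      ext i j; fin_cases i <;> fin_cases j <;>
        simp [Lm, Matrix.mul_apply, Fin.sum_univ_two]
    have h4 : Lm * X₄ᵀ = !![X₄ 0 1, X₄ 1 1; X₄ 0 0, X₄ 1 0] := by
      ext i j; fin_cases i <;> fin_cases j <;>
        simp [Lm, Matrix.mul_apply, Fin.sum_univ_two]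
    have h1 : -(Lm * X₁ᵀ * Lm) = !![-X₁ 1 1, -X₁ 0 1; -X₁ 1 0, -X₁ 0 0] := by
      ext i j; fin_cases i <;> fin_cases j <;>
        simp [Lm, Matrix.mul_apply, Fin.sum_univ_two, Matrix.vecMul, dotProduct,
          Matrix.vecHead, Matrix.vecTail]
    rw [hm_eq, h2, hIt, hIs, h2L, h4, h1, blk_eq]
    ext i j
    fin_cases i <;> fin_cases j <;>
      simp [Matrix.mul_apply, Fin.sum_univ_six, cons_val_five, Matrix.transpose_apply,
        Matrix.vecHead, Matrix.vecTail] <;>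
      linarith [k00, k01, k11]
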